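/- Let ν be a probability measure on S, let θ₁,…,θ_{N'} ∈ Θ and N ≤ N'. Suppose β^N ∈ ℝ^{N+1} is optimal to FALP_N (i.e. V(β^N) satisfies the ALP (Bellman) constraints and ∫_S V(β^N) dν ≥ ∫_S V(β) dν for every β ∈ ℝ^{N+1} whose value function, built from θ₁,…,θ_N, satisfies the ALP constraints) and β^{N'} ∈ ℝ^{N'+1} is optimal to FALP_{N'} (built from θ₁,…,θ_{N'}). Then ∫_S |V* − V(β^{N'})| dν ≤ ∫_S |V* − V(β^N)| dν. -/

import Mathlib

open MeasureTheory ProbabilityTheory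

/-- Any bounded measurable function satisfying the ALP (Bellman) constraints is a
pointwise lower bound on `V*`. -/
lemma feas_le_Vstar {S : Type*} [MeasurableSpace S]
    {A : Type*} [MeasurableSpace A]
    (Act : S → Set A) (hAct : ∀ s, (Act s).Nonempty)
    (c : S × A → ℝ)
    (γ : ℝ) (hγ0 : 0 ≤ γ) (hγ1 : γ < 1)
    (P : Kernel (S × A) S) [IsMarkovKernel P]
    (Vstar : S → ℝ) (hVstar_meas : Measurable Vstar)
    (hVstar_bdd : ∃ M, ∀ s, |Vstar s| ≤ M)
    (hBellman : ∀ s : S,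
      Vstar s = ⨅ a : Act s, (c (s, (a : A)) + γ * ∫ s', Vstar s' ∂(P (s, (a : A)))))
    (V : S → ℝ) (hV_meas : Measurable V) (hV_bdd : ∃ M, ∀ s, |V s| ≤ M)
    (hfeas : ∀ s, ∀ a ∈ Act s, V s - γ * ∫ s', V s' ∂(P (s, a)) ≤ c (s, a)) :
    ∀ s, V s ≤ Vstar s := by
  by_cases hS : Nonempty S
  · obtain ⟨M1, hM1⟩ := hV_bdd
    obtain ⟨M2, hM2⟩ := hVstar_bdd
    have hVint : ∀ (μ : Measure S) [IsProbabilityMeasure μ], Integrable V μ := by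
      intro μ _
      exact (integrable_const M1).mono' hV_meas.aestronglyMeasurable
        (ae_of_all _ fun s => by simpa using hM1 s)
    have hVsint : ∀ (μ : Measure S) [IsProbabilityMeasure μ], Integrable Vstar μ := by
      intro μ _
      exact (integrable_const M2).mono' hVstar_meas.aestronglyMeasurable
        (ae_of_all _ fun s => by simpa using hM2 s)
    set D := sSup (Set.range (fun s => V s - Vstar s)) with hD
    have hrange : (Set.range (fun s => V s - Vstar s)).Nonempty := Set.range_nonempty _
    have hbdd : BddAbove (Set.range (fun s => V s - Vstar s)) := by
      refine ⟨M1 + M2, ?_⟩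
      rintro x ⟨s, rfl⟩
      have := abs_le.1 (hM1 s)
      have := abs_le.1 (hM2 s)
      simp only []
      linarith [this.1, this.2]
    have hle : ∀ s, V s - Vstar s ≤ D := fun s => le_csSup hbdd ⟨s, rfl⟩
    have key : ∀ ε > (0:ℝ), D ≤ γ * D + ε := by
      intro ε hε
      apply csSup_le hrange
      rintro x ⟨s, rfl⟩
      have hne : Nonempty ↥(Act s) := (hAct s).to_subtype
      have h1 : (⨅ a : Act s, (c (s, (a : A)) + γ * ∫ s', Vstar s' ∂(P (s, (a : A)))))
          < Vstar s + ε := by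
        rw [← hBellman s]; linarith
      obtain ⟨a, ha⟩ := exists_lt_of_ciInf_lt h1
      have hfe := hfeas s a a.2
      have hsub : ∫ s', (V s' - Vstar s') ∂(P (s, (a : A)))
          = (∫ s', V s' ∂(P (s, (a : A)))) - ∫ s', Vstar s' ∂(P (s, (a : A))) :=
        integral_sub (hVint _) (hVsint _)
      have hDint : ∫ s', (V s' - Vstar s') ∂(P (s, (a : A))) ≤ D := by
        calc ∫ s', (V s' - Vstar s') ∂(P (s, (a : A)))
            ≤ ∫ _, D ∂(P (s, (a : A))) :=
              integral_mono ((hVint _).sub (hVsint _)) (integrable_const D) hle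
          _ = D := by simp
      have hmul : γ * ((∫ s', V s' ∂(P (s, (a : A)))) - ∫ s', Vstar s' ∂(P (s, (a : A)))) ≤ γ * D := by
        rw [← hsub]
        exact mul_le_mul_of_nonneg_left hDint hγ0
      simp only []
      linarith [hfe, ha, hmul]
    have hDγ : D ≤ γ * D := le_of_forall_pos_le_add key
    have hD0 : D ≤ 0 := by nlinarith
    intro s
    have := hle s
    linarith
  · intro s
    exact absurd ⟨s⟩ hS

/-- Reindexing lemma: a sum over `Fin N'` whose coefficients vanish at indices `≥ N`
reduces to a sum over `Fin N`. -/
lemma sum_extend_zero {N N' : ℕ} (hNN' : N ≤ N') (βN : Fin N → ℝ) (f : Fin N' → ℝ) :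
    ∑ j : Fin N', (if h : (j : ℕ) < N then βN ⟨j, h⟩ else 0) * f j
      = ∑ i : Fin N, βN i * f (Fin.castLE hNN' i) := by
  rw [← Finset.sum_subset (Finset.subset_univ (Finset.univ.map (Fin.castLEEmb hNN')))]
  · rw [Finset.sum_map]
    apply Finset.sum_congr rfl
    intro i _
    simp [Fin.castLEEmb, Fin.castLE]
  · intro j _ hj
    have hjN : ¬ (j : ℕ) < N := by
      intro h
      exact hj (Finset.mem_map.2 ⟨⟨(j : ℕ), h⟩, Finset.mem_univ _, by ext; simp⟩)
    simp [hjN]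

/-- The random basis function `φ(s;θ) = φ̄(⟨(1,s), θ⟩)`. -/
noncomputable def phi (d : ℕ) (phibar : ℝ → ℝ)
    (θ : EuclideanSpace ℝ (Fin (d + 1))) (s : EuclideanSpace ℝ (Fin d)) : ℝ :=
  phibar (θ 0 + ∑ i : Fin d, s i * θ i.succ)

lemma phi_measurable {d : ℕ} (Sset : Set (EuclideanSpace ℝ (Fin d))) (phibar : ℝ → ℝ)
    (L : NNReal) (hLip : LipschitzWith L phibar)
    (θ : EuclideanSpace ℝ (Fin (d + 1))) :
    Measurable fun s : ↥Sset => phi d phibar θ (s : EuclideanSpace ℝ (Fin d)) := by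
  apply hLip.continuous.measurable.comp
  apply Measurable.const_add
  apply Finset.measurable_sum
  intro i _
  exact (((EuclideanSpace.proj i).continuous.measurable).comp
    measurable_subtype_coe).mul_const _

/-- Adding random basis functions weakly improves the `(1,ν)`-norm
distance of optimal FALP VFAs to `V*`: if `β^N` is optimal to FALP_N (using the first `N`
of the `N'` samples) and `β^{N'}` is optimal to FALP_{N'}, then
`∫ |V* − V(β^{N'})| dν ≤ ∫ |V* − V(β^N)| dν`. -/
theorem stmt_4
    {d : ℕ} (Sset : Set (EuclideanSpace ℝ (Fin d)))
    {A : Type*} [MeasurableSpace A]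
    (Act : ↥Sset → Set A) (hAct : ∀ s, (Act s).Nonempty)
    (c : ↥Sset × A → ℝ) (hc_meas : Measurable c) (hc_bdd : ∃ M, ∀ p, |c p| ≤ M)
    (γ : ℝ) (hγ0 : 0 ≤ γ) (hγ1 : γ < 1)
    (P : Kernel (↥Sset × A) ↥Sset) [IsMarkovKernel P]
    (Vstar : ↥Sset → ℝ) (hVstar_meas : Measurable Vstar)
    (hVstar_bdd : ∃ M, ∀ s, |Vstar s| ≤ M)
    (hBellman : ∀ s : ↥Sset,
      Vstar s = ⨅ a : Act s, (c (s, (a : A)) + γ * ∫ s', Vstar s' ∂(P (s, (a : A)))))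
    (L : NNReal) (phibar : ℝ → ℝ) (hLip : LipschitzWith L phibar)
    (hphibar_bdd : ∀ x, |phibar x| ≤ 1)
    (ν : Measure ↥Sset) [IsProbabilityMeasure ν]
    (N N' : ℕ) (hNN' : N ≤ N') (θ : Fin N' → EuclideanSpace ℝ (Fin (d + 1)))
    (βN₀ : ℝ) (βN : Fin N → ℝ)
    (hβN_feas : ∀ s : ↥Sset, ∀ a ∈ Act s,
      (βN₀ + ∑ i : Fin N, βN i * phi d phibar (θ (Fin.castLE hNN' i)) (s : EuclideanSpace ℝ (Fin d)))
        - γ * ∫ s', (βN₀ + ∑ i : Fin N,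
            βN i * phi d phibar (θ (Fin.castLE hNN' i)) (s' : EuclideanSpace ℝ (Fin d))) ∂(P (s, a))
        ≤ c (s, a))
    (hβN_opt : ∀ (β₀ : ℝ) (β : Fin N → ℝ),
      (∀ s : ↥Sset, ∀ a ∈ Act s,
        (β₀ + ∑ i : Fin N, β i * phi d phibar (θ (Fin.castLE hNN' i)) (s : EuclideanSpace ℝ (Fin d)))
          - γ * ∫ s', (β₀ + ∑ i : Fin N,
              β i * phi d phibar (θ (Fin.castLE hNN' i)) (s' : EuclideanSpace ℝ (Fin d))) ∂(P (s, a))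
          ≤ c (s, a)) →
      ∫ s, (β₀ + ∑ i : Fin N, β i * phi d phibar (θ (Fin.castLE hNN' i)) (s : EuclideanSpace ℝ (Fin d))) ∂ν
        ≤ ∫ s, (βN₀ + ∑ i : Fin N, βN i * phi d phibar (θ (Fin.castLE hNN' i)) (s : EuclideanSpace ℝ (Fin d))) ∂ν)
    (βN'₀ : ℝ) (βN' : Fin N' → ℝ)
    (hβN'_feas : ∀ s : ↥Sset, ∀ a ∈ Act s,
      (βN'₀ + ∑ i : Fin N', βN' i * phi d phibar (θ i) (s : EuclideanSpace ℝ (Fin d)))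
        - γ * ∫ s', (βN'₀ + ∑ i : Fin N',
            βN' i * phi d phibar (θ i) (s' : EuclideanSpace ℝ (Fin d))) ∂(P (s, a))
        ≤ c (s, a))
    (hβN'_opt : ∀ (β₀ : ℝ) (β : Fin N' → ℝ),
      (∀ s : ↥Sset, ∀ a ∈ Act s,
        (β₀ + ∑ i : Fin N', β i * phi d phibar (θ i) (s : EuclideanSpace ℝ (Fin d)))
          - γ * ∫ s', (β₀ + ∑ i : Fin N',
              β i * phi d phibar (θ i) (s' : EuclideanSpace ℝ (Fin d))) ∂(P (s, a))
          ≤ c (s, a)) →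
      ∫ s, (β₀ + ∑ i : Fin N', β i * phi d phibar (θ i) (s : EuclideanSpace ℝ (Fin d))) ∂ν
        ≤ ∫ s, (βN'₀ + ∑ i : Fin N', βN' i * phi d phibar (θ i) (s : EuclideanSpace ℝ (Fin d))) ∂ν) :
    ∫ s, |Vstar s - (βN'₀ + ∑ i : Fin N', βN' i * phi d phibar (θ i) (s : EuclideanSpace ℝ (Fin d)))| ∂ν
      ≤ ∫ s, |Vstar s - (βN₀ + ∑ i : Fin N, βN i * phi d phibar (θ (Fin.castLE hNN' i)) (s : EuclideanSpace ℝ (Fin d)))| ∂ν := by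
  -- value functions
  set W : ↥Sset → ℝ := fun s =>
    βN₀ + ∑ i : Fin N, βN i * phi d phibar (θ (Fin.castLE hNN' i)) (s : EuclideanSpace ℝ (Fin d))
    with hWdef
  set W' : ↥Sset → ℝ := fun s =>
    βN'₀ + ∑ i : Fin N', βN' i * phi d phibar (θ i) (s : EuclideanSpace ℝ (Fin d))
    with hW'def
  -- measurability
  have hW_meas : Measurable W := by
    apply Measurable.const_add
    exact Finset.measurable_sum _ fun i _ =>
      (phi_measurable Sset phibar L hLip (θ (Fin.castLE hNN' i))).const_mul _
  have hW'_meas : Measurable W' := by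
    apply Measurable.const_add
    exact Finset.measurable_sum _ fun i _ =>
      (phi_measurable Sset phibar L hLip (θ i)).const_mul _
  -- boundedness
  have hphi_abs : ∀ (ϑ : EuclideanSpace ℝ (Fin (d + 1))) (x : EuclideanSpace ℝ (Fin d)),
      |phi d phibar ϑ x| ≤ 1 := fun ϑ x => hphibar_bdd _
  have hW_bdd : ∃ M, ∀ s, |W s| ≤ M := by
    refine ⟨|βN₀| + ∑ i : Fin N, |βN i|, fun s => ?_⟩
    calc |W s| ≤ |βN₀| + |∑ i : Fin N, βN i * phi d phibar (θ (Fin.castLE hNN' i)) (s : EuclideanSpace ℝ (Fin d))| := abs_add_le _ _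
      _ ≤ |βN₀| + ∑ i : Fin N, |βN i * phi d phibar (θ (Fin.castLE hNN' i)) (s : EuclideanSpace ℝ (Fin d))| :=
          add_le_add_right (Finset.abs_sum_le_sum_abs _ _) _
      _ ≤ |βN₀| + ∑ i : Fin N, |βN i| := by
          refine add_le_add_right (Finset.sum_le_sum fun i _ => ?_) _
          rw [abs_mul]
          exact mul_le_of_le_one_right (abs_nonneg _) (hphi_abs _ _)
  have hW'_bdd : ∃ M, ∀ s, |W' s| ≤ M := by
    refine ⟨|βN'₀| + ∑ i : Fin N', |βN' i|, fun s => ?_⟩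
    calc |W' s| ≤ |βN'₀| + |∑ i : Fin N', βN' i * phi d phibar (θ i) (s : EuclideanSpace ℝ (Fin d))| := abs_add_le _ _
      _ ≤ |βN'₀| + ∑ i : Fin N', |βN' i * phi d phibar (θ i) (s : EuclideanSpace ℝ (Fin d))| :=
          add_le_add_right (Finset.abs_sum_le_sum_abs _ _) _
      _ ≤ |βN'₀| + ∑ i : Fin N', |βN' i| := by
          refine add_le_add_right (Finset.sum_le_sum fun i _ => ?_) _
          rw [abs_mul]
          exact mul_le_of_le_one_right (abs_nonneg _) (hphi_abs _ _)
  -- feasible functions are below V*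
  have hW_le : ∀ s, W s ≤ Vstar s :=
    feas_le_Vstar Act hAct c γ hγ0 hγ1 P Vstar hVstar_meas hVstar_bdd hBellman
      W hW_meas hW_bdd hβN_feas
  have hW'_le : ∀ s, W' s ≤ Vstar s :=
    feas_le_Vstar Act hAct c γ hγ0 hγ1 P Vstar hVstar_meas hVstar_bdd hBellman
      W' hW'_meas hW'_bdd hβN'_feas
  -- the extension of βN by zeros is feasible for FALP_{N'}
  have hg : ∀ x : EuclideanSpace ℝ (Fin d),
      ∑ j : Fin N', (if h : (j : ℕ) < N then βN ⟨j, h⟩ else 0) * phi d phibar (θ j) x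
        = ∑ i : Fin N, βN i * phi d phibar (θ (Fin.castLE hNN' i)) x := fun x =>
    sum_extend_zero hNN' βN _
  have hWW' : ∫ s, W s ∂ν ≤ ∫ s, W' s ∂ν := by
    have h := hβN'_opt βN₀ (fun j => if h : (j : ℕ) < N then βN ⟨j, h⟩ else 0) ?_
    · simpa only [hg] using h
    · intro s a ha
      simp only [hg]
      exact hβN_feas s a ha
  -- integrability over ν
  obtain ⟨M0, hM0⟩ := hVstar_bdd
  obtain ⟨M1, hM1⟩ := hW_bdd
  obtain ⟨M2, hM2⟩ := hW'_bdd
  have hVint : Integrable Vstar ν :=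
    (integrable_const M0).mono' hVstar_meas.aestronglyMeasurable
      (ae_of_all _ fun s => by simpa using hM0 s)
  have hWint : Integrable W ν :=
    (integrable_const M1).mono' hW_meas.aestronglyMeasurable
      (ae_of_all _ fun s => by simpa using hM1 s)
  have hW'int : Integrable W' ν :=
    (integrable_const M2).mono' hW'_meas.aestronglyMeasurable
      (ae_of_all _ fun s => by simpa using hM2 s)
  -- rewrite the absolute values
  have h1 : ∫ s, |Vstar s - W' s| ∂ν = ∫ s, (Vstar s - W' s) ∂ν :=
    integral_congr_ae (ae_of_all _ fun s => abs_of_nonneg (by linarith [hW'_le s]))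
  have h2 : ∫ s, |Vstar s - W s| ∂ν = ∫ s, (Vstar s - W s) ∂ν :=
    integral_congr_ae (ae_of_all _ fun s => abs_of_nonneg (by linarith [hW_le s]))
  show ∫ s, |Vstar s - W' s| ∂ν ≤ ∫ s, |Vstar s - W s| ∂ν
  rw [h1, h2, integral_sub hVint hW'int, integral_sub hVint hWint]
  linarith
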